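/- Let d ≥ 2 be an integer and let s ∈ ℂ be a root of unity. Then the maps f(z) = z^d and g(z) = s^{d−1}·z^d on ℂ have the same set of preperiodic points: {z ∈ ℂ : ∃ n > k ≥ 0, f^[n](z) = f^[k](z)} = {z ∈ ℂ : ∃ n > k ≥ 0, g^[n](z) = g^[k](z)}. -/
import Mathlib

private lemma iter_pow (d : ℕ) (z : ℂ) : ∀ n, (fun w : ℂ => w ^ d)^[n] z = z ^ (d ^ n) := by
  intro n
  induction n with
  | zero => simp
  | succ n ih =>
    rw [Function.iterate_succ_apply', ih]
    simp [← pow_mul, pow_succ]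

private lemma iter_g (d : ℕ) (hd : 1 ≤ d) (s z : ℂ) :
    ∀ n, s * (fun w : ℂ => s ^ (d - 1) * w ^ d)^[n] z = (s * z) ^ (d ^ n) := by
  intro n
  induction n with
  | zero => simp
  | succ n ih =>
    rw [Function.iterate_succ_apply']
    set y := (fun w : ℂ => s ^ (d - 1) * w ^ d)^[n] z with hy
    show s * (s ^ (d - 1) * y ^ d) = (s * z) ^ d ^ (n + 1)
    have hsd : s * s ^ (d - 1) = s ^ d := by
      rw [← pow_succ']
      congr 1
      omega
    calc s * (s ^ (d - 1) * y ^ d) = (s * s ^ (d - 1)) * y ^ d := by ring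
      _ = s ^ d * y ^ d := by rw [hsd]
      _ = (s * y) ^ d := (mul_pow s y d).symm
      _ = ((s * z) ^ (d ^ n)) ^ d := by rw [ih]
      _ = (s * z) ^ (d ^ (n + 1)) := by rw [← pow_mul, pow_succ]

private lemma pow_eq_of_modEq (w : ℂ) (m : ℕ) (hw : w ^ m = 1) {a b : ℕ} (hab : a ≤ b)
    (h : a ≡ b [MOD m]) : w ^ a = w ^ b := by
  obtain ⟨t, ht⟩ := (Nat.modEq_iff_dvd' hab).mp h
  have : b = a + m * t := by omega
  rw [this, pow_add, pow_mul, hw, one_pow, mul_one]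

private lemma char_prep (d : ℕ) (hd : 2 ≤ d) (w : ℂ) :
    (∃ n k : ℕ, k < n ∧ w ^ (d ^ n) = w ^ (d ^ k)) ↔
      (w = 0 ∨ ∃ m : ℕ, 1 ≤ m ∧ w ^ m = 1) := by
  constructor
  · rintro ⟨n, k, hkn, h⟩
    by_cases hw : w = 0
    · exact Or.inl hw
    right
    have hlt : d ^ k < d ^ n := Nat.pow_lt_pow_right (by omega) hkn
    refine ⟨d ^ n - d ^ k, by omega, ?_⟩
    have : w ^ (d ^ n - d ^ k) * w ^ (d ^ k) = w ^ (d ^ k) := by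
      rw [← pow_add]
      rw [Nat.sub_add_cancel hlt.le, h]
    have hne : w ^ (d ^ k) ≠ 0 := pow_ne_zero _ hw
    field_simp at this
    exact this
  · rintro (rfl | ⟨m, hm, hw⟩)
    · exact ⟨2, 1, by omega, by
        rw [zero_pow (by positivity), zero_pow (by positivity)]⟩
    · haveI : NeZero m := ⟨by omega⟩
      obtain ⟨a, b, hab, heq⟩ :=
        Finite.exists_ne_map_eq_of_infinite (fun i : ℕ => (d : ZMod m) ^ i)
      have hmod : d ^ a ≡ d ^ b [MOD m] := by
        rwa [← ZMod.natCast_eq_natCast_iff, Nat.cast_pow, Nat.cast_pow]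
      rcases lt_or_gt_of_ne hab with h | h
      · exact ⟨b, a, h, (pow_eq_of_modEq w m hw (Nat.pow_le_pow_right (by omega) h.le)
          hmod).symm⟩
      · exact ⟨a, b, h, (pow_eq_of_modEq w m hw (Nat.pow_le_pow_right (by omega) h.le)
          hmod.symm).symm⟩

/-- For `d ≥ 2` and `s` a root of unity, the maps `f(z) = z^d` and
`g(z) = s^(d-1)·z^d` have the same set of preperiodic points in `ℂ`. -/
theorem statement14 (d : ℕ) (hd : 2 ≤ d) (s : ℂ) (hs : ∃ n : ℕ, 1 ≤ n ∧ s ^ n = 1) :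
    {z : ℂ | ∃ n k : ℕ, k < n ∧
        (fun w : ℂ => w ^ d)^[n] z = (fun w : ℂ => w ^ d)^[k] z} =
    {z : ℂ | ∃ n k : ℕ, k < n ∧
        (fun w : ℂ => s ^ (d - 1) * w ^ d)^[n] z =
          (fun w : ℂ => s ^ (d - 1) * w ^ d)^[k] z} := by
  obtain ⟨M, hM1, hsM⟩ := hs
  have hs0 : s ≠ 0 := by
    intro h
    rw [h, zero_pow (by omega)] at hsM
    exact one_ne_zero hsM.symm
  ext z
  simp only [Set.mem_setOf_eq]
  have hL : (∃ n k : ℕ, k < n ∧ (fun w : ℂ => w ^ d)^[n] z = (fun w : ℂ => w ^ d)^[k] z) ↔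
      (z = 0 ∨ ∃ m : ℕ, 1 ≤ m ∧ z ^ m = 1) := by
    rw [← char_prep d hd z]
    constructor <;> rintro ⟨n, k, hkn, h⟩ <;> refine ⟨n, k, hkn, ?_⟩
    · rwa [iter_pow, iter_pow] at h
    · rwa [iter_pow, iter_pow]
  have hR : (∃ n k : ℕ, k < n ∧ (fun w : ℂ => s ^ (d - 1) * w ^ d)^[n] z =
      (fun w : ℂ => s ^ (d - 1) * w ^ d)^[k] z) ↔
      (s * z = 0 ∨ ∃ m : ℕ, 1 ≤ m ∧ (s * z) ^ m = 1) := by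
    rw [← char_prep d hd (s * z)]
    constructor <;> rintro ⟨n, k, hkn, h⟩ <;> refine ⟨n, k, hkn, ?_⟩
    · rw [← iter_g d (by omega) s z, ← iter_g d (by omega) s z, h]
    · have h1 : s * (fun w : ℂ => s ^ (d - 1) * w ^ d)^[n] z
          = s * (fun w : ℂ => s ^ (d - 1) * w ^ d)^[k] z := by
        rw [iter_g d (by omega) s z, iter_g d (by omega) s z, h]
      exact mul_left_cancel₀ hs0 h1
  rw [hL, hR]
  have hmM : ∀ m : ℕ, 1 ≤ m → 1 ≤ m * M := fun m hm =>
    Nat.one_le_iff_ne_zero.mpr (Nat.mul_ne_zero (by omega) (by omega))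
  constructor
  · rintro (rfl | ⟨m, hm, hz⟩)
    · exact Or.inl (mul_zero s)
    · right
      refine ⟨m * M, hmM m hm, ?_⟩
      have hstep : (s * z) ^ (m * M) = (s ^ M) ^ m * (z ^ m) ^ M := by
        rw [mul_pow, ← pow_mul, ← pow_mul, mul_comm M m]
      rw [hstep, hsM, hz, one_pow, one_pow, mul_one]
  · rintro (h | ⟨m, hm, hz⟩)
    · exact Or.inl (by simpa [hs0] using h)
    · right
      refine ⟨m * M, hmM m hm, ?_⟩
      have h1 : (s * z) ^ (m * M) = 1 := by rw [pow_mul, hz, one_pow]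
      have h2 : s ^ (m * M) = 1 := by rw [mul_comm, pow_mul, hsM, one_pow]
      rw [mul_pow, h2, one_mul] at h1
      exact h1
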